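/- In an unweighted directed graph G with s-t shortest path P, for any fixed landmark vertex l the quantity M[l, v_i] := |s→l avoiding edges of P[v_i, t]| is non-decreasing as i decreases; more precisely, M[l, v_i] = min( M[l, v_{i-1}], dist(s, v_i) + dist_{G∖P}(v_i, l) ), where dist_{G∖P} denotes shortest-path distance in G with all edges of P removed. -/

import Mathlib

/-!
STATEMENT 8: for a fixed landmark `l`, with `M[l, v_i] := |s → l avoiding edges of P[v_i, t]|`,
the quantity `M[l, v_i]` is non-decreasing as `i` decreases, and more precisely
`M[l, v_i] = min( M[l, v_{i-1}], dist(s, v_i) + dist_{G∖P}(v_i, l) )`.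
-/

variable {V : Type*}

/-- `x → y` is an edge of the path `P = (v 0, …, v h)`. -/
def PEdge (h : ℕ) (v : ℕ → V) (x y : V) : Prop := ∃ i, i < h ∧ x = v i ∧ y = v (i + 1)

/-- edges of the subpath `P[v m, v h]` (i.e. `P[v_m, t]`). -/
def PTailEdge (h : ℕ) (v : ℕ → V) (m : ℕ) (x y : V) : Prop :=
  ∃ j, m ≤ j ∧ j < h ∧ x = v j ∧ y = v (j + 1)

/-- Shortest walk length from `a` to `b` in `G` avoiding all (directed) edges in `F`. -/
noncomputable def distAvoid (G F : V → V → Prop) (a b : V) : ℕ∞ :=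
  sInf {L : ℕ∞ | ∃ (n : ℕ) (w : ℕ → V), w 0 = a ∧ w n = b ∧
    (∀ t < n, G (w t) (w (t + 1)) ∧ ¬ F (w t) (w (t + 1))) ∧ L = (n : ℕ∞)}

/-- Shortest-path distance in `G`. -/
noncomputable def distG (G : V → V → Prop) (a b : V) : ℕ∞ :=
  distAvoid G (fun _ _ => False) a b

/-- `M[l, v_i]`: length of a shortest path from `s = v 0` to `l` avoiding all edges of
`P[v_i, t]`. -/
noncomputable def Mland (G : V → V → Prop) (h : ℕ) (v : ℕ → V) (l : V) (i : ℕ) : ℕ∞ :=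
  distAvoid G (PTailEdge h v i) (v 0) l

/-- A walk gives an upper bound on `distAvoid`. -/
lemma distAvoid_le_walk {G F : V → V → Prop} {a b : V} (n : ℕ) (w : ℕ → V)
    (h0 : w 0 = a) (hn : w n = b)
    (hs : ∀ t < n, G (w t) (w (t + 1)) ∧ ¬ F (w t) (w (t + 1))) :
    distAvoid G F a b ≤ (n : ℕ∞) :=
  sInf_le ⟨n, w, h0, hn, hs, rfl⟩

/-- To bound `distAvoid` from below, bound every walk. -/
lemma le_distAvoid_walk {G F : V → V → Prop} {a b : V} {c : ℕ∞}
    (h : ∀ (n : ℕ) (w : ℕ → V), w 0 = a → w n = b →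
      (∀ t < n, G (w t) (w (t + 1)) ∧ ¬ F (w t) (w (t + 1))) → c ≤ (n : ℕ∞)) :
    c ≤ distAvoid G F a b := by
  apply le_sInf
  rintro L ⟨n, w, h0, hn, hs, rfl⟩
  exact h n w h0 hn hs

lemma distAvoid_mono {G F F' : V → V → Prop} {a b : V}
    (hFF : ∀ x y, F' x y → F x y) :
    distAvoid G F' a b ≤ distAvoid G F a b := by
  apply le_distAvoid_walk
  intro n w h0 hn hs
  exact distAvoid_le_walk n w h0 hn
    (fun t ht => ⟨(hs t ht).1, fun hf => (hs t ht).2 (hFF _ _ hf)⟩)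

section Path
variable {G : V → V → Prop} {h : ℕ} {v : ℕ → V}

/-- Vertices along a shortest path are pairwise distinct. -/
lemma v_inj (hP : ∀ t < h, G (v t) (v (t + 1)))
    (hshortest : ∀ (L : ℕ) (w : ℕ → V), w 0 = v 0 → w L = v h →
      (∀ t < L, G (w t) (w (t + 1))) → h ≤ L)
    {a b : ℕ} (hab : a < b) (hbh : b ≤ h) : v a ≠ v b := by
  intro hv
  have key : h ≤ h - (b - a) := by
    apply hshortest (h - (b - a)) (fun t => if t ≤ a then v t else v (t + (b - a)))
    · show (if 0 ≤ a then v 0 else v (0 + (b - a))) = v 0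
      rw [if_pos (Nat.zero_le a)]
    · show (if h - (b - a) ≤ a then v (h - (b - a)) else v (h - (b - a) + (b - a))) = v h
      by_cases hc : h - (b - a) ≤ a
      · have e1 : h - (b - a) = a := by omega
        have e2 : b = h := by omega
        rw [if_pos hc, e1, hv, e2]
      · rw [if_neg hc]
        congr 1
        omega
    · intro t ht
      show G (if t ≤ a then v t else v (t + (b - a)))
          (if t + 1 ≤ a then v (t + 1) else v (t + 1 + (b - a)))
      by_cases h1 : t + 1 ≤ a
      · rw [if_pos (by omega : t ≤ a), if_pos h1]
        exact hP t (by omega)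
      · have hwt : (if t ≤ a then v t else v (t + (b - a))) = v (t + (b - a)) := by
          by_cases h2 : t ≤ a
          · have hta : t = a := by omega
            subst hta
            rw [if_pos h2, hv]
            congr 1
            omega
          · rw [if_neg h2]
        rw [hwt, if_neg h1]
        have e : t + 1 + (b - a) = (t + (b - a)) + 1 := by omega
        rw [e]
        exact hP _ (by omega)
  omega

/-- Any walk from `v 0` to `v u` has length at least `u`. -/
lemma walk_len_ge (hP : ∀ t < h, G (v t) (v (t + 1)))
    (hshortest : ∀ (L : ℕ) (w : ℕ → V), w 0 = v 0 → w L = v h →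
      (∀ t < L, G (w t) (w (t + 1))) → h ≤ L)
    {u : ℕ} (hu : u ≤ h) (n : ℕ) (w : ℕ → V)
    (h0 : w 0 = v 0) (hn : w n = v u)
    (hs : ∀ t < n, G (w t) (w (t + 1))) : u ≤ n := by
  have key : h ≤ n + (h - u) := by
    apply hshortest (n + (h - u)) (fun t => if t ≤ n then w t else v (u + (t - n)))
    · show (if 0 ≤ n then w 0 else v (u + (0 - n))) = v 0
      rw [if_pos (Nat.zero_le n)]
      exact h0
    · show (if n + (h - u) ≤ n then w (n + (h - u)) else v (u + (n + (h - u) - n))) = v h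
      by_cases hc : n + (h - u) ≤ n
      · have e1 : n + (h - u) = n := by omega
        have e2 : u = h := by omega
        rw [if_pos hc, e1, hn, e2]
      · rw [if_neg hc]
        congr 1
        omega
    · intro t ht
      show G (if t ≤ n then w t else v (u + (t - n)))
          (if t + 1 ≤ n then w (t + 1) else v (u + (t + 1 - n)))
      by_cases h1 : t + 1 ≤ n
      · rw [if_pos (by omega : t ≤ n), if_pos h1]
        exact hs t (by omega)
      · have hwt : (if t ≤ n then w t else v (u + (t - n))) = v (u + (t - n)) := by
          by_cases h2 : t ≤ n
          · have htn : t = n := by omega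
            subst htn
            rw [if_pos h2, hn]
            congr 1
            omega
          · rw [if_neg h2]
        rw [hwt, if_neg h1]
        have e : u + (t + 1 - n) = (u + (t - n)) + 1 := by omega
        rw [e]
        exact hP _ (by omega)
  omega

/-- Gluing the prefix `P[v 0, v u]` to a `P`-avoiding walk `v u → l` gives an upper bound
for `Mland` at any index `m ≥ u`. -/
lemma Mland_le_prefix_add (hP : ∀ t < h, G (v t) (v (t + 1)))
    (hinj : ∀ a b : ℕ, a < b → b ≤ h → v a ≠ v b)
    {l : V} {u m : ℕ} (hum : u ≤ m) (hmh : m ≤ h) :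
    Mland G h v l m ≤ (u : ℕ∞) + distAvoid G (PEdge h v) (v u) l := by
  rcases eq_or_ne (distAvoid G (PEdge h v) (v u) l) ⊤ with htop | htop
  · rw [htop, add_top]
    exact le_top
  · have hne : {L : ℕ∞ | ∃ (n : ℕ) (w : ℕ → V), w 0 = v u ∧ w n = l ∧
        (∀ t < n, G (w t) (w (t + 1)) ∧ ¬ PEdge h v (w t) (w (t + 1))) ∧
        L = (n : ℕ∞)}.Nonempty := by
      by_contra hc
      rw [Set.not_nonempty_iff_eq_empty] at hc
      apply htop
      rw [distAvoid, hc, sInf_empty]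
    have hmem := csInf_mem hne
    obtain ⟨n, w, h0, hn, hs, hL⟩ := hmem
    have hDA : distAvoid G (PEdge h v) (v u) l = (n : ℕ∞) := hL
    rw [hDA, ← Nat.cast_add]
    apply distAvoid_le_walk (u + n) (fun t => if t < u then v t else w (t - u))
    · show (if 0 < u then v 0 else w (0 - u)) = v 0
      by_cases hc : 0 < u
      · rw [if_pos hc]
      · rw [if_neg hc]
        have : u = 0 := by omega
        rw [Nat.zero_sub, h0, this]
    · show (if u + n < u then v (u + n) else w (u + n - u)) = l
      rw [if_neg (by omega)]
      have e : u + n - u = n := by omega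
      rw [e, hn]
    · intro t ht
      by_cases h1 : t + 1 ≤ u
      · have hwt : (if t < u then v t else w (t - u)) = v t := if_pos (by omega)
        have hwt1 : (if t + 1 < u then v (t + 1) else w (t + 1 - u)) = v (t + 1) := by
          by_cases h2 : t + 1 < u
          · rw [if_pos h2]
          · rw [if_neg h2]
            have e : t + 1 - u = 0 := by omega
            have e2 : t + 1 = u := by omega
            rw [e, h0, e2]
        show G (if t < u then v t else w (t - u)) (if t + 1 < u then v (t + 1) else w (t + 1 - u)) ∧
          ¬ PTailEdge h v m (if t < u then v t else w (t - u))
            (if t + 1 < u then v (t + 1) else w (t + 1 - u))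
        rw [hwt, hwt1]
        constructor
        · exact hP t (by omega)
        · rintro ⟨j, hmj, hjh, hx, hy⟩
          exact hinj t j (by omega) (by omega) (hx ▸ rfl)
      · have hwt : (if t < u then v t else w (t - u)) = w (t - u) := if_neg (by omega)
        have hwt1 : (if t + 1 < u then v (t + 1) else w (t + 1 - u)) = w ((t - u) + 1) := by
          rw [if_neg (by omega)]
          congr 1
          omega
        show G (if t < u then v t else w (t - u)) (if t + 1 < u then v (t + 1) else w (t + 1 - u)) ∧
          ¬ PTailEdge h v m (if t < u then v t else w (t - u))
            (if t + 1 < u then v (t + 1) else w (t + 1 - u))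
        rw [hwt, hwt1]
        have hstep := hs (t - u) (by omega)
        refine ⟨hstep.1, ?_⟩
        rintro ⟨j, hmj, hjh, hx, hy⟩
        exact hstep.2 ⟨j, hjh, hx, hy⟩

end Path

theorem stmt8 (G : V → V → Prop) (h : ℕ) (v : ℕ → V) (l : V)
    (hP : ∀ t < h, G (v t) (v (t + 1)))
    (hshortest : ∀ (L : ℕ) (w : ℕ → V), w 0 = v 0 → w L = v h →
      (∀ t < L, G (w t) (w (t + 1))) → h ≤ L)
    (i : ℕ) (hi1 : 1 ≤ i) (hih : i ≤ h) :
    Mland G h v l i ≤ Mland G h v l (i - 1) ∧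
    Mland G h v l i =
      min (Mland G h v l (i - 1))
        (distG G (v 0) (v i) + distAvoid G (PEdge h v) (v i) l) := by
  classical
  have hinj : ∀ a b : ℕ, a < b → b ≤ h → v a ≠ v b :=
    fun a b hab hbh => v_inj hP hshortest hab hbh
  have hmono : Mland G h v l i ≤ Mland G h v l (i - 1) := by
    apply distAvoid_mono
    rintro x y ⟨j, hij, hjh, hx, hy⟩
    exact ⟨j, by omega, hjh, hx, hy⟩
  refine ⟨hmono, le_antisymm (le_min hmono ?_) ?_⟩
  · -- Mland i ≤ distG (v 0) (v i) + distAvoid (PEdge) (v i) l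
    have h1 : Mland G h v l i ≤ (i : ℕ∞) + distAvoid G (PEdge h v) (v i) l :=
      Mland_le_prefix_add hP hinj le_rfl hih
    have h2 : (i : ℕ∞) ≤ distG G (v 0) (v i) := by
      apply le_distAvoid_walk
      intro n w h0 hn hs
      have := walk_len_ge hP hshortest hih n w h0 hn (fun t ht => (hs t ht).1)
      exact_mod_cast this
    exact h1.trans (add_le_add_left h2 _)
  · -- min ≤ Mland i
    apply le_distAvoid_walk
    intro n w h0 hn hs
    by_cases hQ : ∃ t, t < n ∧ PEdge h v (w t) (w (t + 1))
    · set Q : ℕ → Prop := fun t => t < n ∧ PEdge h v (w t) (w (t + 1)) with hQdef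
      obtain ⟨t0, ht0⟩ := hQ
      set T := Nat.findGreatest Q n with hTdef
      have hQT : Q T := Nat.findGreatest_spec (le_of_lt ht0.1) ht0
      obtain ⟨hTn, j, hjh, hx, hy⟩ := hQT
      have hji : j < i := by
        by_contra hc
        exact (hs T hTn).2 ⟨j, by omega, hjh, hx, hy⟩
      -- prefix bound : j + 1 ≤ T + 1
      have hpre : j + 1 ≤ T + 1 :=
        walk_len_ge hP hshortest (by omega) (T + 1) w h0 hy
          (fun t ht => (hs t (by omega)).1)
      -- suffix bound
      have hsuf : distAvoid G (PEdge h v) (v (j + 1)) l ≤ ((n - (T + 1) : ℕ) : ℕ∞) := by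
        apply distAvoid_le_walk (n - (T + 1)) (fun m => w (T + 1 + m))
        · show w (T + 1 + 0) = v (j + 1)
          rw [Nat.add_zero]
          exact hy
        · show w (T + 1 + (n - (T + 1))) = l
          have e : T + 1 + (n - (T + 1)) = n := by omega
          rw [e, hn]
        · intro m hm
          constructor
          · exact (hs (T + 1 + m) (by omega)).1
          · intro hPE
            have hgt : Nat.findGreatest Q n < T + 1 + m := by omega
            exact Nat.findGreatest_is_greatest (P := Q) hgt (by omega) ⟨by omega, hPE⟩
      rcases eq_or_lt_of_le (by omega : j + 1 ≤ i) with hji' | hji'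
      · -- last P-edge ends exactly at v i
        apply le_trans (min_le_right _ _)
        have hdG : distG G (v 0) (v i) ≤ (i : ℕ∞) := by
          apply distAvoid_le_walk i v rfl rfl
          intro t ht
          exact ⟨hP t (by omega), not_false⟩
        calc distG G (v 0) (v i) + distAvoid G (PEdge h v) (v i) l
            ≤ (i : ℕ∞) + ((n - (T + 1) : ℕ) : ℕ∞) := add_le_add hdG (hji' ▸ hsuf)
          _ = ((i + (n - (T + 1)) : ℕ) : ℕ∞) := (Nat.cast_add _ _).symm
          _ ≤ (n : ℕ∞) := by
              rw [Nat.cast_le]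
              omega
      · -- last P-edge ends at v (j+1) with j + 1 ≤ i - 1
        apply le_trans (min_le_left _ _)
        have hM : Mland G h v l (i - 1) ≤
            ((j + 1 : ℕ) : ℕ∞) + distAvoid G (PEdge h v) (v (j + 1)) l :=
          Mland_le_prefix_add hP hinj (by omega) (by omega)
        calc Mland G h v l (i - 1)
            ≤ ((j + 1 : ℕ) : ℕ∞) + distAvoid G (PEdge h v) (v (j + 1)) l := hM
          _ ≤ ((j + 1 : ℕ) : ℕ∞) + ((n - (T + 1) : ℕ) : ℕ∞) := add_le_add_right hsuf _
          _ = (((j + 1) + (n - (T + 1)) : ℕ) : ℕ∞) := (Nat.cast_add _ _).symm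
          _ ≤ (n : ℕ∞) := by
              rw [Nat.cast_le]
              omega
    · -- the walk avoids all edges of P
      apply le_trans (min_le_left _ _)
      apply distAvoid_le_walk n w h0 hn
      intro t ht
      refine ⟨(hs t ht).1, ?_⟩
      rintro ⟨j, hj1, hjh, hx, hy⟩
      exact hQ ⟨t, ht, ⟨j, hjh, hx, hy⟩⟩
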